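/- Optimality among symmetric tests (Lemma 1): with Q₀ := ∑_{σ ∈ S} P_{0;σ} and Q₁ := ∑_{σ ∈ S} P_{1;σ}, assume Q₁ ≪ Q₀ and let ℓ := Q₁.rnDeriv Q₀. For t ∈ ℝ≥0∞ and γ ∈ [0,1] define φ* by φ*(x) = 1 if ℓ(x) > t, γ if ℓ(x) = t, 0 if ℓ(x) < t. Then for every symmetric test ψ (i.e. ψ(x ∘ τ) = ψ(x) for all x and all τ) with P_F(ψ) ≤ P_F(φ*), one has P_M(ψ) ≥ P_M(φ*). -/

import Mathlib

open MeasureTheory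
open scoped ENNReal BigOperators

noncomputable def labelSet {ι : Type*} {n : ℕ} (ν : Fin n → ι) : Finset (Fin n → ι) :=
  letI := Classical.decEq (Fin n → ι)
  Finset.univ.image (fun π : Equiv.Perm (Fin n) => ν ∘ ⇑π)

noncomputable def prodM {X ι : Type*} [MeasurableSpace X] (μ : ι → Measure X) {n : ℕ}
    (σ : Fin n → ι) : Measure (Fin n → X) :=
  Measure.pi fun j => μ (σ j)

noncomputable def PF {X ι : Type*} [MeasurableSpace X] (μ₀ : ι → Measure X) {n : ℕ}
    (ν : Fin n → ι) (ψ : (Fin n → X) → ℝ) : ℝ :=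
  ⨆ σ ∈ labelSet ν, ∫ x, ψ x ∂(prodM μ₀ σ)

noncomputable def PM {X ι : Type*} [MeasurableSpace X] (μ₁ : ι → Measure X) {n : ℕ}
    (ν : Fin n → ι) (ψ : (Fin n → X) → ℝ) : ℝ :=
  ⨆ σ ∈ labelSet ν, ∫ x, (1 - ψ x) ∂(prodM μ₁ σ)

noncomputable def mixM {X ι : Type*} [MeasurableSpace X] (μ : ι → Measure X) {n : ℕ}
    (ν : Fin n → ι) : Measure (Fin n → X) :=
  ∑ σ ∈ labelSet ν, prodM μ σ

section Aux

variable {X ι : Type*} [MeasurableSpace X] {n : ℕ}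

lemma mem_labelSet_iff {ν σ : Fin n → ι} :
    σ ∈ labelSet ν ↔ ∃ π : Equiv.Perm (Fin n), σ = ν ∘ ⇑π := by
  classical
  simp [labelSet, eq_comm]

lemma self_mem_labelSet (ν : Fin n → ι) : ν ∈ labelSet ν :=
  mem_labelSet_iff.2 ⟨Equiv.refl _, rfl⟩

instance prodM.instIsProbabilityMeasure (μ : ι → Measure X) [∀ i, IsProbabilityMeasure (μ i)]
    (σ : Fin n → ι) : IsProbabilityMeasure (prodM μ σ) :=
  inferInstanceAs (IsProbabilityMeasure (Measure.pi fun j => μ (σ j)))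

instance mixM.instIsFiniteMeasure (μ : ι → Measure X) [∀ i, IsProbabilityMeasure (μ i)]
    (ν : Fin n → ι) : IsFiniteMeasure (mixM μ ν) := by
  refine ⟨?_⟩
  rw [mixM, Measure.finset_sum_apply]
  have : ∀ σ ∈ labelSet ν, (prodM μ σ) Set.univ = 1 := fun σ _ => measure_univ
  rw [Finset.sum_congr rfl this]
  simp

noncomputable def permEquiv (X : Type*) [MeasurableSpace X] {n : ℕ} (π : Equiv.Perm (Fin n)) :
    (Fin n → X) ≃ᵐ (Fin n → X) :=
  MeasurableEquiv.piCongrLeft (fun _ => X) π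

lemma permEquiv_apply (π : Equiv.Perm (Fin n)) (x : Fin n → X) :
    permEquiv X π x = fun j => x (π.symm j) := by
  funext j
  have h := MeasurableEquiv.piCongrLeft_apply_apply (β := fun _ : Fin n => X) π x (π.symm j)
  simpa [permEquiv] using h

lemma map_permEquiv_prodM (μ : ι → Measure X) [∀ i, IsProbabilityMeasure (μ i)]
    (σ : Fin n → ι) (π : Equiv.Perm (Fin n)) :
    (prodM μ (σ ∘ ⇑π)).map (permEquiv X π) = prodM μ σ :=
  (MeasureTheory.measurePreserving_piCongrLeft (fun i => μ (σ i)) π).map_eq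

lemma map_finset_sum_measure {α β γ : Type*} [MeasurableSpace α] [MeasurableSpace β]
    {f : α → β} (hf : Measurable f) (s : Finset γ) (μ : γ → Measure α) :
    (∑ i ∈ s, μ i).map f = ∑ i ∈ s, (μ i).map f := by
  classical
  induction s using Finset.induction_on with
  | empty => simp
  | insert _ _ h ih =>
      rw [Finset.sum_insert h, Finset.sum_insert h, Measure.map_add _ _ hf, ih]

lemma sum_prodM_comp (μ : ι → Measure X) (ν : Fin n → ι) (π : Equiv.Perm (Fin n)) :
    ∑ σ ∈ labelSet ν, prodM μ (σ ∘ ⇑π) = ∑ σ ∈ labelSet ν, prodM μ σ := by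
  refine Finset.sum_nbij' (fun σ => σ ∘ ⇑π) (fun σ => σ ∘ ⇑π.symm) ?_ ?_ ?_ ?_ ?_
  · intro σ hσ
    obtain ⟨ρ, rfl⟩ := mem_labelSet_iff.1 hσ
    exact mem_labelSet_iff.2 ⟨π.trans ρ, rfl⟩
  · intro σ hσ
    obtain ⟨ρ, rfl⟩ := mem_labelSet_iff.1 hσ
    exact mem_labelSet_iff.2 ⟨π.symm.trans ρ, rfl⟩
  · intro σ _; funext j; simp
  · intro σ _; funext j; simp
  · intro σ _; rfl

lemma map_permEquiv_mixM (μ : ι → Measure X) [∀ i, IsProbabilityMeasure (μ i)]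
    (ν : Fin n → ι) (π : Equiv.Perm (Fin n)) :
    (mixM μ ν).map (permEquiv X π) = mixM μ ν := by
  conv_lhs => rw [mixM, ← sum_prodM_comp μ ν π]
  rw [map_finset_sum_measure (permEquiv X π).measurable]
  exact Finset.sum_congr rfl fun σ _ => map_permEquiv_prodM μ σ π

lemma prodM_ac_mixM (μ : ι → Measure X) {ν σ : Fin n → ι} (hσ : σ ∈ labelSet ν) :
    prodM μ σ ≪ mixM μ ν := by
  refine Measure.AbsolutelyContinuous.mk fun s hs h0 => ?_
  rw [mixM, Measure.finset_sum_apply] at h0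
  exact (Finset.sum_eq_zero_iff.1 h0) σ hσ

lemma rnDeriv_permEquiv (μ₀ μ₁ : ι → Measure X) [∀ i, IsProbabilityMeasure (μ₀ i)]
    [∀ i, IsProbabilityMeasure (μ₁ i)] (ν : Fin n → ι) (π : Equiv.Perm (Fin n)) :
    (fun x => (mixM μ₁ ν).rnDeriv (mixM μ₀ ν) (permEquiv X π x)) =ᵐ[mixM μ₀ ν]
      (mixM μ₁ ν).rnDeriv (mixM μ₀ ν) := by
  have h := (permEquiv X π).measurableEmbedding.rnDeriv_map (mixM μ₁ ν) (mixM μ₀ ν)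
  rwa [map_permEquiv_mixM, map_permEquiv_mixM] at h

lemma integral_comp_permEquiv (μ : ι → Measure X) [∀ i, IsProbabilityMeasure (μ i)]
    (σ : Fin n → ι) (π : Equiv.Perm (Fin n)) (g : (Fin n → X) → ℝ) :
    ∫ x, g x ∂(prodM μ σ) = ∫ x, g (permEquiv X π x) ∂(prodM μ (σ ∘ ⇑π)) := by
  rw [← map_permEquiv_prodM μ σ π, (permEquiv X π).measurableEmbedding.integral_map]

lemma integrable_of_bound01 {α : Type*} [MeasurableSpace α] (μ : Measure α) [IsFiniteMeasure μ]
    {f : α → ℝ} (hf : Measurable f) (h0 : ∀ x, 0 ≤ f x) (h1 : ∀ x, f x ≤ 1) :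
    Integrable f μ :=
  (integrable_const (1 : ℝ)).mono hf.aestronglyMeasurable
    (Filter.Eventually.of_forall fun x => by
      rw [Real.norm_of_nonneg (h0 x), norm_one]; exact h1 x)

lemma biSup_finset_const {α : Type*} {S : Finset α} {F : α → ℝ} {c : ℝ}
    (hS : S.Nonempty) (hc : 0 ≤ c) (h : ∀ σ ∈ S, F σ = c) :
    (⨆ σ ∈ S, F σ) = c := by
  have hub : ∀ σ : α, (⨆ _ : σ ∈ S, F σ) ≤ c := fun σ =>
    Real.iSup_le (fun hσ => (h σ hσ).le) hc
  apply le_antisymm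
  · exact Real.iSup_le hub hc
  · obtain ⟨σ₀, hσ₀⟩ := hS
    have hbdd : BddAbove (Set.range fun σ => ⨆ _ : σ ∈ S, F σ) := by
      refine ⟨c, ?_⟩
      rintro _ ⟨σ, rfl⟩
      exact hub σ
    refine le_ciSup_of_le hbdd σ₀ ?_
    rw [ciSup_pos hσ₀]
    exact (h σ₀ hσ₀).ge

end Aux

theorem mixture_lrt_optimal_among_symmetric
    {X ι : Type*} [MeasurableSpace X]
    (μ₀ μ₁ : ι → Measure X)
    [∀ i, IsProbabilityMeasure (μ₀ i)] [∀ i, IsProbabilityMeasure (μ₁ i)]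
    {n : ℕ} (ν : Fin n → ι)
    (hac : mixM μ₁ ν ≪ mixM μ₀ ν)
    (t : ℝ≥0∞) (γ : ℝ) (hγ0 : 0 ≤ γ) (hγ1 : γ ≤ 1)
    (φ : (Fin n → X) → ℝ)
    (hφ1 : ∀ x, t < (mixM μ₁ ν).rnDeriv (mixM μ₀ ν) x → φ x = 1)
    (hφγ : ∀ x, (mixM μ₁ ν).rnDeriv (mixM μ₀ ν) x = t → φ x = γ)
    (hφ0 : ∀ x, (mixM μ₁ ν).rnDeriv (mixM μ₀ ν) x < t → φ x = 0)
    (ψ : (Fin n → X) → ℝ) (hψmeas : Measurable ψ)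
    (hψ0 : ∀ x, 0 ≤ ψ x) (hψ1 : ∀ x, ψ x ≤ 1)
    (hψsym : ∀ (x : Fin n → X) (τ : Equiv.Perm (Fin n)), ψ (fun j => x (τ j)) = ψ x)
    (hPF : PF μ₀ ν ψ ≤ PF μ₀ ν φ) :
    PM μ₁ ν ψ ≥ PM μ₁ ν φ := by
  classical
  set Q₀ := mixM μ₀ ν with hQ₀def
  set Q₁ := mixM μ₁ ν with hQ₁def
  set ℓ := Q₁.rnDeriv Q₀ with hℓdef
  have hℓmeas : Measurable ℓ := Measure.measurable_rnDeriv _ _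
  -- pointwise bounds on φ
  have hφ0' : ∀ x, 0 ≤ φ x := by
    intro x; rcases lt_trichotomy (ℓ x) t with h | h | h
    · rw [hφ0 x h]
    · rw [hφγ x h]; exact hγ0
    · rw [hφ1 x h]; exact zero_le_one
  have hφ1' : ∀ x, φ x ≤ 1 := by
    intro x; rcases lt_trichotomy (ℓ x) t with h | h | h
    · rw [hφ0 x h]; exact zero_le_one
    · rw [hφγ x h]; exact hγ1
    · rw [hφ1 x h]
  have hφeq : φ = fun x => if ℓ x < t then 0 else if ℓ x = t then γ else 1 := by
    funext x; rcases lt_trichotomy (ℓ x) t with h | h | h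
    · rw [hφ0 x h, if_pos h]
    · rw [hφγ x h, if_neg (by simp [h]), if_pos h]
    · rw [hφ1 x h, if_neg (not_lt.2 h.le), if_neg h.ne']
  have hφmeas : Measurable φ := by
    rw [hφeq]
    exact Measurable.ite (hℓmeas measurableSet_Iio) measurable_const
      (Measurable.ite (hℓmeas (measurableSet_singleton t)) measurable_const measurable_const)
  -- a.e. symmetry of φ
  have hφae : ∀ π : Equiv.Perm (Fin n), ∀ᵐ x ∂Q₀, φ (permEquiv X π x) = φ x := by
    intro π
    filter_upwards [rnDeriv_permEquiv μ₀ μ₁ ν π] with x hx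
    have hx' : ℓ (permEquiv X π x) = ℓ x := hx
    rw [hφeq]; simp only; rw [hx']
  -- absolute continuity of components w.r.t. Q₀
  have hac0 : ∀ σ ∈ labelSet ν, prodM μ₀ σ ≪ Q₀ := fun σ hσ =>
    prodM_ac_mixM μ₀ hσ
  have hac1 : ∀ σ ∈ labelSet ν, prodM μ₁ σ ≪ Q₀ := fun σ hσ =>
    (prodM_ac_mixM μ₁ hσ).trans hac
  -- integrals of a.e.-symmetric functions over components are all equal
  have comp_eq : ∀ (μ : ι → Measure X), ∀ [∀ i, IsProbabilityMeasure (μ i)],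
      (∀ σ ∈ labelSet ν, prodM μ σ ≪ Q₀) → ∀ g : (Fin n → X) → ℝ,
      (∀ π : Equiv.Perm (Fin n), ∀ᵐ x ∂Q₀, g (permEquiv X π x) = g x) →
      ∀ σ ∈ labelSet ν, ∫ x, g x ∂(prodM μ σ) = ∫ x, g x ∂(prodM μ ν) := by
    intro μ _ hab g hg σ hσ
    obtain ⟨π, rfl⟩ := mem_labelSet_iff.1 hσ
    conv_rhs => rw [integral_comp_permEquiv μ ν π]
    refine integral_congr_ae ?_
    filter_upwards [(hab _ hσ).ae_le (hg π)] with x hx using hx.symm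
  have hψae : ∀ π : Equiv.Perm (Fin n), ∀ᵐ x ∂Q₀, ψ (permEquiv X π x) = ψ x := by
    intro π
    refine Filter.Eventually.of_forall fun x => ?_
    rw [permEquiv_apply]
    exact hψsym x π.symm
  have hφcomp0 := comp_eq μ₀ hac0 φ hφae
  have hψcomp0 := comp_eq μ₀ hac0 ψ hψae
  have hφcomp1 := comp_eq μ₁ hac1 (fun x => 1 - φ x)
    (fun π => by filter_upwards [hφae π] with x hx; rw [hx])
  have hψcomp1 := comp_eq μ₁ hac1 (fun x => 1 - ψ x)
    (fun π => by filter_upwards [hψae π] with x hx; rw [hx])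
  have hS : (labelSet ν).Nonempty := ⟨ν, self_mem_labelSet ν⟩
  -- collapse the suprema
  have hPFφ : PF μ₀ ν φ = ∫ x, φ x ∂(prodM μ₀ ν) := by
    refine biSup_finset_const hS (integral_nonneg hφ0') hφcomp0
  have hPFψ : PF μ₀ ν ψ = ∫ x, ψ x ∂(prodM μ₀ ν) := by
    refine biSup_finset_const hS (integral_nonneg hψ0) hψcomp0
  have hPMφ : PM μ₁ ν φ = ∫ x, (1 - φ x) ∂(prodM μ₁ ν) := by
    refine biSup_finset_const hS (integral_nonneg fun x => by simp [hφ1' x]) hφcomp1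
  have hPMψ : PM μ₁ ν ψ = ∫ x, (1 - ψ x) ∂(prodM μ₁ ν) := by
    refine biSup_finset_const hS (integral_nonneg fun x => by simp [hψ1 x]) hψcomp1
  -- integrability facts
  have intφ : ∀ (μ : ι → Measure X) [∀ i, IsProbabilityMeasure (μ i)] (σ : Fin n → ι),
      Integrable φ (prodM μ σ) := fun μ _ σ => integrable_of_bound01 _ hφmeas hφ0' hφ1'
  have intψ : ∀ (μ : ι → Measure X) [∀ i, IsProbabilityMeasure (μ i)] (σ : Fin n → ι),
      Integrable ψ (prodM μ σ) := fun μ _ σ => integrable_of_bound01 _ hψmeas hψ0 hψ1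
  have intφQ₀ : Integrable φ Q₀ := integrable_of_bound01 _ hφmeas hφ0' hφ1'
  have intψQ₀ : Integrable ψ Q₀ := integrable_of_bound01 _ hψmeas hψ0 hψ1
  have intφQ₁ : Integrable φ Q₁ := integrable_of_bound01 _ hφmeas hφ0' hφ1'
  have intψQ₁ : Integrable ψ Q₁ := integrable_of_bound01 _ hψmeas hψ0 hψ1
  -- mixture integrals as card * component integral
  have sumQ : ∀ (μ : ι → Measure X) [∀ i, IsProbabilityMeasure (μ i)] (g : (Fin n → X) → ℝ),
      (∀ σ ∈ labelSet ν, Integrable g (prodM μ σ)) →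
      (∀ σ ∈ labelSet ν, ∫ x, g x ∂(prodM μ σ) = ∫ x, g x ∂(prodM μ ν)) →
      ∫ x, g x ∂(mixM μ ν) = ((labelSet ν).card : ℝ) * ∫ x, g x ∂(prodM μ ν) := by
    intro μ _ g hint hcomp
    rw [mixM, integral_finset_sum_measure hint, Finset.sum_congr rfl hcomp,
      Finset.sum_const, nsmul_eq_mul]
  have hcard : (0 : ℝ) < ((labelSet ν).card : ℝ) := by
    exact_mod_cast Finset.card_pos.2 hS
  -- Q₀-level inequality
  have hQ0 : ∫ x, ψ x ∂Q₀ ≤ ∫ x, φ x ∂Q₀ := by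
    rw [hQ₀def, sumQ μ₀ ψ (fun σ _ => intψ μ₀ σ) hψcomp0,
      sumQ μ₀ φ (fun σ _ => intφ μ₀ σ) hφcomp0]
    exact mul_le_mul_of_nonneg_left (by rw [← hPFψ, ← hPFφ]; exact hPF) hcard.le
  -- Q₁-level inequality
  have hQ1 : ∫ x, ψ x ∂Q₁ ≤ ∫ x, φ x ∂Q₁ := by
    by_cases ht : t = ∞
    · have hℓfin := Measure.rnDeriv_lt_top Q₁ Q₀
      have hφ0ae : φ =ᵐ[Q₀] 0 := by
        filter_upwards [hℓfin] with x hx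
        exact hφ0 x (by rw [ht]; exact hx)
      have hφint0 : ∫ x, φ x ∂Q₀ = 0 := by
        rw [integral_congr_ae hφ0ae]; simp
      have hψint0 : ∫ x, ψ x ∂Q₀ = 0 :=
        le_antisymm (hQ0.trans_eq hφint0) (integral_nonneg hψ0)
      have hψ0ae : ψ =ᵐ[Q₀] 0 := (integral_eq_zero_iff_of_nonneg hψ0 intψQ₀).1 hψint0
      have hψ0ae1 : ψ =ᵐ[Q₁] 0 := hac.ae_le hψ0ae
      rw [integral_congr_ae hψ0ae1]
      simpa using integral_nonneg hφ0'
    · have key : ∀ᵐ x ∂Q₀, t.toReal * (φ x - ψ x) ≤ (ℓ x).toReal * (φ x - ψ x) := by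
        filter_upwards [Measure.rnDeriv_lt_top Q₁ Q₀] with x hx
        rcases lt_trichotomy (ℓ x) t with h | h | h
        · have hl : (ℓ x).toReal ≤ t.toReal := ENNReal.toReal_mono ht h.le
          have hd : φ x - ψ x ≤ 0 := by rw [hφ0 x h]; linarith [hψ0 x]
          exact mul_le_mul_of_nonpos_right hl hd
        · rw [h]
        · have hl : t.toReal ≤ (ℓ x).toReal := ENNReal.toReal_mono hx.ne h.le
          have hd : 0 ≤ φ x - ψ x := by rw [hφ1 x h]; linarith [hψ1 x]
          exact mul_le_mul_of_nonneg_right hl hd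
      have hint1 : Integrable (fun x => φ x - ψ x) Q₁ := intφQ₁.sub intψQ₁
      have lhs_int : Integrable (fun x => t.toReal * (φ x - ψ x)) Q₀ :=
        (intφQ₀.sub intψQ₀).const_mul _
      have rhs_int : Integrable (fun x => (ℓ x).toReal * (φ x - ψ x)) Q₀ := by
        have := (MeasureTheory.integrable_rnDeriv_smul_iff hac).2 hint1
        simpa [smul_eq_mul] using this
      have h1 : ∫ x, t.toReal * (φ x - ψ x) ∂Q₀ ≤ ∫ x, (ℓ x).toReal * (φ x - ψ x) ∂Q₀ :=
        integral_mono_ae lhs_int rhs_int key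
      have h2 : ∫ x, (ℓ x).toReal * (φ x - ψ x) ∂Q₀ = ∫ x, (φ x - ψ x) ∂Q₁ := by
        simpa [smul_eq_mul] using
          MeasureTheory.integral_rnDeriv_smul hac (f := fun x => φ x - ψ x)
      have h3 : 0 ≤ ∫ x, t.toReal * (φ x - ψ x) ∂Q₀ := by
        rw [integral_const_mul, integral_sub intφQ₀ intψQ₀]
        exact mul_nonneg ENNReal.toReal_nonneg (by linarith)
      have h4 : 0 ≤ ∫ x, (φ x - ψ x) ∂Q₁ := le_trans h3 (h1.trans_eq h2)
      rw [integral_sub intφQ₁ intψQ₁] at h4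
      linarith
  -- back to component level over μ₁
  have hcomp1 : ∫ x, ψ x ∂(prodM μ₁ ν) ≤ ∫ x, φ x ∂(prodM μ₁ ν) := by
    have eφ := sumQ μ₁ φ (fun σ _ => intφ μ₁ σ) (comp_eq μ₁ hac1 φ hφae)
    have eψ := sumQ μ₁ ψ (fun σ _ => intψ μ₁ σ) (comp_eq μ₁ hac1 ψ hψae)
    have := hQ1
    rw [hQ₁def, eφ, eψ] at this
    exact le_of_mul_le_mul_left this hcard
  -- conclude
  rw [ge_iff_le, hPMφ, hPMψ]
  have e1 : ∫ x, (1 - φ x) ∂(prodM μ₁ ν) = 1 - ∫ x, φ x ∂(prodM μ₁ ν) := by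
    rw [integral_sub (integrable_const 1) (intφ μ₁ ν)]
    simp
  have e2 : ∫ x, (1 - ψ x) ∂(prodM μ₁ ν) = 1 - ∫ x, ψ x ∂(prodM μ₁ ν) := by
    rw [integral_sub (integrable_const 1) (intψ μ₁ ν)]
    simp
  rw [e1, e2]
  linarith
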